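/- arXiv:2410.20758 — 2 statements merged into one kernel-verified Lean document; each statement's English description precedes it below -/
import Mathlib

section
/- Let c > 0 and z ∈ ℂ. Let 𝒞 be the Hankel contour consisting of the lower edge of the cut from −∞ to −δ, the circle t = δe^{iφ}, −π ≤ φ ≤ π, and the upper edge of the cut from −δ back to −∞ (for any δ > 0). Then (1/(2πi)) ∫_𝒞 t^{−z} e^{ct} dt = c^{z−1}/Γ(z). -/
open MeasureTheory Set Filter Complex intervalIntegral
open scoped Real Topology

namespace Hankel11

variable {c δ : ℝ} {w z : ℂ} {n : ℕ}


/-- The line integral `∫_δ^∞ u^{-w} e^{-cu} du`. -/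
noncomputable def LI (c δ : ℝ) (w : ℂ) : ℂ :=
  ∫ u in Set.Ioi δ, (u : ℂ) ^ (-w) * Complex.exp (-(c : ℂ) * u)

/-- Terms of the series for the circle integral. -/
noncomputable def sT (c δ : ℝ) (w : ℂ) (n : ℕ) : ℂ :=
  (-(c : ℂ) * δ) ^ n / (n.factorial : ℂ) * (δ : ℂ) ^ ((1 : ℂ) - w) / ((n : ℂ) + 1 - w)

noncomputable def S (c δ : ℝ) (w : ℂ) : ℂ := ∑' n, sT c δ w n

noncomputable def D (z : ℂ) : ℂ :=
  Complex.exp (z * (Real.pi:ℂ) * I) - Complex.exp (-(z * (Real.pi:ℂ) * I))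



lemma norm_cpow_mul_exp (hu : 0 < c) (hx : (0:ℝ) < u) (w : ℂ) :
    ‖(u : ℂ) ^ (-w) * Complex.exp (-(c : ℂ) * u)‖ = u ^ (-w.re) * Real.exp (-(c*u)) := by
  rw [norm_mul, Complex.norm_cpow_eq_rpow_re_of_pos hx,
    Complex.norm_exp]
  norm_num

lemma contOn_cpow_mul_exp (hδ : 0 < δ) (w : ℂ) :
    ContinuousOn (fun u : ℝ => (u : ℂ) ^ (-w) * Complex.exp (-(c : ℂ) * u)) (Ici δ) := by
  apply ContinuousOn.mul
  · apply continuousOn_of_forall_continuousAt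
    intro x hx
    have h : ContinuousAt (fun y : ℂ => y ^ (-w)) (x : ℂ) :=
      continuousAt_cpow_const <| ofReal_mem_slitPlane.2 (hδ.trans_le hx)
    exact h.comp continuous_ofReal.continuousAt
  · exact (Continuous.mul continuous_const continuous_ofReal).cexp.continuousOn

lemma integrableOn_cpow_mul_exp (hc : 0 < c) (hδ : 0 < δ) (w : ℂ) :
    IntegrableOn (fun u : ℝ => (u : ℂ) ^ (-w) * Complex.exp (-(c : ℂ) * u)) (Ioi δ) := by
  have hg : IntegrableOn (fun u : ℝ => u ^ (-w.re) * Real.exp (-(c*u))) (Ioi δ) := by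
    apply integrable_of_isBigO_exp_neg (b := c/2) (by positivity)
    · apply ContinuousOn.mul
      · exact continuousOn_id.rpow_const fun x hx => Or.inl (hδ.trans_le hx).ne'
      · exact (continuous_const.mul continuous_id).neg.rexp.continuousOn
    · have h0 : Tendsto (fun u : ℝ => u ^ (-w.re) * Real.exp (-(c/2) * u)) atTop (𝓝 0) :=
        tendsto_rpow_mul_exp_neg_mul_atTop_nhds_zero _ _ (by positivity)
      have := (h0.isBigO_one ℝ).mul (Asymptotics.isBigO_refl (fun u : ℝ => Real.exp (-(c/2)*u)) atTop)
      refine (Asymptotics.IsBigO.congr' this ?_ ?_)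
      · filter_upwards with x
        rw [mul_assoc, ← Real.exp_add]
        ring_nf
      · filter_upwards with x
        rw [one_mul]
  apply hg.mono'
  · exact ((contOn_cpow_mul_exp hδ w).mono Ioi_subset_Ici_self).aestronglyMeasurable measurableSet_Ioi
  · filter_upwards [ae_restrict_mem measurableSet_Ioi] with x hx
    rw [norm_cpow_mul_exp hc (hδ.trans hx) w]

lemma tendsto_cpow_mul_exp_atTop (hc : 0 < c) (s : ℂ) :
    Tendsto (fun u : ℝ => (u : ℂ) ^ s * Complex.exp (-(c : ℂ) * u)) atTop (𝓝 0) := by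
  have h0 : Tendsto (fun u : ℝ => u ^ s.re * Real.exp (-c * u)) atTop (𝓝 0) :=
    tendsto_rpow_mul_exp_neg_mul_atTop_nhds_zero _ _ hc
  apply squeeze_zero_norm' _ h0
  filter_upwards [eventually_gt_atTop 0] with x hx
  have := norm_cpow_mul_exp hc hx (-s)
  rw [neg_neg] at this
  rw [this]
  simp [neg_mul, le_refl]




lemma lineRec (hc : 0 < c) (hδ : 0 < δ) (hz : z ≠ 1) :
    (1 - z) * LI c δ z - c * LI c δ (z - 1)
      = -((δ : ℂ) ^ ((1:ℂ) - z) * Complex.exp (-(c : ℂ) * δ)) := by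
  have h1z : (1 : ℂ) - z ≠ 0 := fun h => hz (by linear_combination -h)
  set F : ℝ → ℂ := fun u => (u : ℂ) ^ ((1:ℂ) - z) * Complex.exp (-(c : ℂ) * u) with hF
  set F' : ℝ → ℂ := fun u =>
    (1 - z) * ((u : ℂ) ^ (-z) * Complex.exp (-(c : ℂ) * u))
      - c * ((u : ℂ) ^ (-(z-1)) * Complex.exp (-(c : ℂ) * u)) with hF'
  have hderiv : ∀ x ∈ Ici δ, HasDerivAt F (F' x) x := by
    intro x hx
    have hx0 : x ≠ 0 := (hδ.trans_le hx).ne'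
    have h1 : HasDerivAt (fun y : ℝ => (y : ℂ) ^ ((1:ℂ) - z)) ((1 - z) * (x:ℂ) ^ (-z)) x := by
      have := (hasDerivAt_ofReal_cpow_const' hx0 (r := -z) (fun h => hz (by linear_combination -h))).const_mul (1 - z)
      have e : -z + 1 = (1:ℂ) - z := by ring
      rw [e] at this
      refine this.congr_of_eventuallyEq (Filter.Eventually.of_forall fun y => ?_)
      show (y:ℂ) ^ ((1:ℂ) - z) = (1 - z) * ((y:ℂ) ^ ((1:ℂ) - z) / (1 - z))
      rw [mul_div_assoc', mul_div_cancel_left₀ _ h1z]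
    have h2 : HasDerivAt (fun y : ℝ => Complex.exp (-(c : ℂ) * y))
        (Complex.exp (-(c:ℂ) * x) * (-(c:ℂ))) x := by
      have : HasDerivAt (fun y : ℝ => -(c:ℂ) * y) (-(c:ℂ)) x := by
        simpa using ((hasDerivAt_id x).ofReal_comp).const_mul (-(c:ℂ))
      exact this.cexp
    have := h1.mul h2
    refine HasDerivAt.congr_deriv this ?_
    have e2 : (x:ℂ) ^ ((1:ℂ) - z) = (x:ℂ) ^ (-(z-1)) := by ring_nf
    rw [hF']
    simp only []
    rw [e2]
    ring
  have hint : IntegrableOn F' (Ioi δ) :=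
    ((integrableOn_cpow_mul_exp hc hδ z).const_mul _).sub
      ((integrableOn_cpow_mul_exp hc hδ (z-1)).const_mul _)
  have htend : Tendsto F atTop (𝓝 0) := tendsto_cpow_mul_exp_atTop hc _
  have key := integral_Ioi_of_hasDerivAt_of_tendsto' hderiv hint htend
  have hsplit : ∫ x in Ioi δ, F' x
      = (1 - z) * LI c δ z - c * LI c δ (z - 1) := by
    rw [hF', integral_sub (((integrableOn_cpow_mul_exp hc hδ z).const_mul _))
      (((integrableOn_cpow_mul_exp hc hδ (z-1)).const_mul _)),
      MeasureTheory.integral_const_mul, MeasureTheory.integral_const_mul]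
    rfl
  rw [hsplit] at key
  rw [key, hF]
  simp



noncomputable def tT (c δ : ℝ) (w : ℂ) (n : ℕ) : ℂ :=
  (-(c : ℂ) * δ) ^ n / (n.factorial : ℂ) * (δ : ℂ) ^ ((1 : ℂ) - w)

noncomputable def rT (c δ : ℝ) (w : ℂ) (n : ℕ) : ℂ :=
  tT c δ w n * (-(n : ℂ)) / ((n : ℂ) + 1 - w)



lemma norm_tT (hc : 0 ≤ c) (hδ : 0 ≤ δ) (n : ℕ) :
    ‖tT c δ w n‖ = ‖(δ:ℂ) ^ ((1:ℂ) - w)‖ * ((c*δ)^n / n.factorial) := by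
  rw [tT, norm_mul, norm_div, norm_pow, norm_mul, norm_neg]
  rw [Complex.norm_natCast, Complex.norm_real, Complex.norm_real,
    Real.norm_of_nonneg hc, Real.norm_of_nonneg hδ]
  ring

lemma summable_normB : Summable (fun n => ‖(δ:ℂ) ^ ((1:ℂ) - w)‖ * ((c*δ)^n / (n.factorial : ℝ))) :=
  (Real.summable_pow_div_factorial (c*δ)).mul_left _

lemma summable_tT (hc : 0 ≤ c) (hδ : 0 ≤ δ) : Summable (tT c δ w) := by
  apply Summable.of_norm
  exact summable_normB.congr fun n => (norm_tT hc hδ n).symm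

lemma ev_norm_denom : ∀ᶠ n : ℕ in atTop, (1:ℝ) ≤ ‖(n : ℂ) + 1 - w‖ ∧ (n:ℝ)/2 ≤ ‖(n : ℂ) + 1 - w‖ := by
  have h : ∀ n : ℕ, (n:ℝ) + 1 - ‖w‖ ≤ ‖(n : ℂ) + 1 - w‖ := by
    intro n
    have := norm_sub_norm_le ((n : ℂ) + 1) w
    have hn : ‖(n : ℂ) + 1‖ = (n:ℝ) + 1 := by
      rw [show (n : ℂ) + 1 = ((n + 1 : ℕ) : ℂ) by push_cast; ring, Complex.norm_natCast]
      push_cast; ring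
    linarith
  filter_upwards [eventually_ge_atTop (⌈‖w‖ + 1⌉₊ + ⌈2*‖w‖⌉₊)] with n hn
  have h1 : (⌈‖w‖+1⌉₊ : ℝ) ≤ n := by exact_mod_cast le_trans (Nat.le_add_right _ _) hn
  have h2 : (⌈2*‖w‖⌉₊ : ℝ) ≤ n := by exact_mod_cast le_trans (Nat.le_add_left _ _) hn
  have hw1 : ‖w‖ + 1 ≤ (⌈‖w‖+1⌉₊ : ℝ) := Nat.le_ceil _
  have hw2 : 2*‖w‖ ≤ (⌈2*‖w‖⌉₊ : ℝ) := Nat.le_ceil _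
  constructor
  · linarith [h n]
  · linarith [h n]

lemma summable_sT (hc : 0 ≤ c) (hδ : 0 ≤ δ) : Summable (sT c δ w) := by
  apply Summable.of_norm_bounded_eventually_nat summable_normB
  filter_upwards [ev_norm_denom (w := w)] with n hn
  have h1 : (1:ℝ) ≤ ‖(n : ℂ) + 1 - w‖ := hn.1
  have : ‖sT c δ w n‖ = ‖tT c δ w n‖ / ‖(n : ℂ) + 1 - w‖ := by
    rw [sT, tT, norm_div]
  rw [this, norm_tT hc hδ]
  exact div_le_self (by positivity) h1

lemma summable_rT (hc : 0 ≤ c) (hδ : 0 ≤ δ) : Summable (rT c δ w) := by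
  apply Summable.of_norm_bounded_eventually_nat
    (g := fun n => 2 * (‖(δ:ℂ) ^ ((1:ℂ) - w)‖ * ((c*δ)^n / (n.factorial : ℝ))))
    (summable_normB.mul_left 2)
  filter_upwards [ev_norm_denom (w := w), eventually_gt_atTop 0] with n hn hn0
  have h2 : (n:ℝ)/2 ≤ ‖(n : ℂ) + 1 - w‖ := hn.2
  have hpos : (0:ℝ) < ‖(n : ℂ) + 1 - w‖ := lt_of_lt_of_le (by positivity) h2
  have : ‖rT c δ w n‖ = ‖tT c δ w n‖ * (n:ℝ) / ‖(n : ℂ) + 1 - w‖ := by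
    rw [rT, norm_div, norm_mul, norm_neg, Complex.norm_natCast]
  rw [this, norm_tT hc hδ, div_le_iff₀ hpos]
  have hB : (0:ℝ) ≤ ‖(δ:ℂ) ^ ((1:ℂ) - w)‖ * ((c*δ)^n / (n.factorial:ℝ)) := by positivity
  calc ‖(δ:ℂ) ^ ((1:ℂ)-w)‖ * ((c*δ)^n / (n.factorial:ℝ)) * (n:ℝ)
      = (‖(δ:ℂ) ^ ((1:ℂ)-w)‖ * ((c*δ)^n / (n.factorial:ℝ))) * (2 * ((n:ℝ)/2)) := by ring
    _ ≤ (‖(δ:ℂ) ^ ((1:ℂ)-w)‖ * ((c*δ)^n / (n.factorial:ℝ))) * (2 * ‖(n : ℂ) + 1 - w‖) := by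
        apply mul_le_mul_of_nonneg_left _ hB
        linarith
    _ = 2 * (‖(δ:ℂ) ^ ((1:ℂ)-w)‖ * ((c*δ)^n / (n.factorial:ℝ))) * ‖(n : ℂ) + 1 - w‖ := by ring


lemma tsum_tT (hδ : 0 < δ) :
    ∑' n, tT c δ z n = (δ:ℂ) ^ ((1:ℂ) - z) * Complex.exp (-(c:ℂ) * δ) := by
  have : Complex.exp (-(c:ℂ) * δ) = ∑' n : ℕ, (-(c:ℂ) * δ)^n / n.factorial := by
    rw [Complex.exp_eq_exp_ℂ, NormedSpace.exp_eq_tsum_div]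
  rw [this, ← tsum_mul_left]
  refine tsum_congr fun n => ?_
  rw [tT]; ring

lemma sRec (hc : 0 < c) (hδ : 0 < δ) (hz : ∀ n : ℕ, z ≠ (n:ℂ) + 1) :
    (1 - z) * S c δ z - c * S c δ (z - 1)
      = (δ:ℂ) ^ ((1:ℂ) - z) * Complex.exp (-(c:ℂ) * δ) := by
  have hδ0 : (δ:ℂ) ≠ 0 := Complex.ofReal_ne_zero.2 hδ.ne'
  have hne : ∀ n : ℕ, (n:ℂ) + 1 - z ≠ 0 := fun n h => hz n (by linear_combination -h)
  have hne' : ∀ n : ℕ, (n:ℂ) + 1 - (z - 1) ≠ 0 := by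
    intro n h
    apply hz (n+1)
    push_cast
    linear_combination -h
  have hA : ∀ n, (1 - z) * sT c δ z n = tT c δ z n + rT c δ z n := by
    intro n
    have hf : (n.factorial:ℂ) ≠ 0 := Nat.cast_ne_zero.2 n.factorial_ne_zero
    rw [sT, rT, tT]
    field_simp [hne n, hf]
    ring
  have hB : ∀ n, (c:ℂ) * sT c δ (z-1) n = rT c δ z (n+1) := by
    intro n
    rw [sT, rT, tT]
    have hfac : ((n+1).factorial : ℂ) = (n+1) * (n.factorial : ℂ) := by
      rw [Nat.factorial_succ]; push_cast; ring
    have hpow : (δ:ℂ) ^ ((1:ℂ) - (z - 1)) = δ * (δ:ℂ) ^ ((1:ℂ) - z) := by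
      rw [show (1:ℂ) - (z-1) = 1 + (1 - z) by ring, Complex.cpow_add _ _ hδ0, Complex.cpow_one]
    have h1 : (n:ℂ) + 1 - (z - 1) = ((n+1 : ℕ):ℂ) + 1 - z := by push_cast; ring
    rw [hpow, hfac, h1]
    have h2 : ((n:ℂ)+1) + 1 - z ≠ 0 := by
      have := hne (n+1); push_cast at this; convert this using 2
    have hf : (n.factorial:ℂ) ≠ 0 := Nat.cast_ne_zero.2 n.factorial_ne_zero
    have hn1 : ((n:ℂ) + 1) ≠ 0 := by
      have := Nat.cast_add_one_ne_zero (R := ℂ) n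
      exact this
    rw [pow_succ]
    push_cast
    field_simp [h2, hf, hn1]
  have hsum_s1 : Summable (fun n => (c:ℂ) * sT c δ (z-1) n) :=
    (summable_sT hc.le hδ.le).mul_left _
  have hsum_r : Summable (rT c δ z) := summable_rT hc.le hδ.le
  have hsum_t : Summable (tT c δ z) := summable_tT hc.le hδ.le
  have e1 : (1 - z) * S c δ z = ∑' n, tT c δ z n + ∑' n, rT c δ z n := by
    rw [S, ← tsum_mul_left, tsum_congr hA, Summable.tsum_add hsum_t hsum_r]
  have e2 : (c:ℂ) * S c δ (z-1) = ∑' n, rT c δ z (n+1) := by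
    rw [S, ← tsum_mul_left]
    exact tsum_congr hB
  have e3 : ∑' n, rT c δ z n = rT c δ z 0 + ∑' n, rT c δ z (n+1) :=
    Summable.tsum_eq_zero_add hsum_r
  have e4 : rT c δ z 0 = 0 := by simp [rT]
  rw [e1, e2, ← tsum_tT hδ]
  rw [e3, e4]
  ring



lemma contOn_pos (s : ℂ) :
    ContinuousOn (fun u : ℝ => (u : ℂ) ^ s * Complex.exp (-(c : ℂ) * u)) (Ioi 0) := by
  apply ContinuousOn.mul
  · apply continuousOn_of_forall_continuousAt
    intro x hx
    have h : ContinuousAt (fun y : ℂ => y ^ s) (x : ℂ) :=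
      continuousAt_cpow_const <| ofReal_mem_slitPlane.2 hx
    exact h.comp continuous_ofReal.continuousAt
  · exact (Continuous.mul continuous_const continuous_ofReal).cexp.continuousOn

lemma integrableOn_rpow_Ioc (hδ : 0 < δ) {r : ℝ} (hr : -1 < r) :
    IntegrableOn (fun u : ℝ => u ^ r) (Ioc 0 δ) :=
  (intervalIntegrable_iff_integrableOn_Ioc_of_le hδ.le).mp
    (intervalIntegral.intervalIntegrable_rpow' hr)

lemma integrableOn_Ioc_cpow_mul_exp (hc : 0 < c) (hδ : 0 < δ) (hz : z.re < 1) :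
    IntegrableOn (fun u : ℝ => (u : ℂ) ^ (-z) * Complex.exp (-(c : ℂ) * u)) (Ioc 0 δ) := by
  apply Integrable.mono' (integrableOn_rpow_Ioc hδ (r := -z.re) (by linarith))
  · exact ((contOn_pos (-z)).mono Ioc_subset_Ioi_self).aestronglyMeasurable measurableSet_Ioc
  · filter_upwards [ae_restrict_mem measurableSet_Ioc] with x hx
    rw [norm_cpow_mul_exp hc hx.1]
    have h1 : Real.exp (-(c*x)) ≤ 1 := by
      rw [Real.exp_le_one_iff]
      nlinarith [hx.1.le, hc.le]
    calc x ^ (-z.re) * Real.exp (-(c*x)) ≤ x ^ (-z.re) * 1 :=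
          mul_le_mul_of_nonneg_left h1 (Real.rpow_nonneg hx.1.le _)
      _ = x ^ (-z.re) := mul_one _

lemma norm_F (hc : 0 < c) {x : ℝ} (hx : 0 < x) (n : ℕ) (s : ℂ) :
    ‖(x : ℂ) ^ s * ((-(c:ℂ) * x) ^ n / (n.factorial : ℂ))‖
      = x ^ s.re * ((c*x)^n / (n.factorial : ℝ)) := by
  have e : (-(c:ℂ) * x) = ((-(c*x):ℝ):ℂ) := by push_cast; ring
  have h1 : ‖(x:ℂ) ^ s‖ = x ^ s.re := by
    rw [Complex.norm_cpow_eq_rpow_re_of_pos hx]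
  have h2 : ‖((-(c*x):ℝ):ℂ)‖ = c * x := by
    rw [Complex.norm_real, Real.norm_eq_abs, abs_neg]
    exact abs_of_nonneg (by positivity)
  have h3 : ‖((n.factorial:ℂ))‖ = (n.factorial:ℝ) := Complex.norm_natCast _
  rw [norm_mul, norm_div, norm_pow, e, h1, h2, h3]

lemma Ioc_eq_S (hc : 0 < c) (hδ : 0 < δ) (hz : z.re < 1) :
    ∫ u in Ioc 0 δ, (u : ℂ) ^ (-z) * Complex.exp (-(c : ℂ) * u) = S c δ z := by
  have hδ0 : (δ:ℂ) ≠ 0 := Complex.ofReal_ne_zero.2 hδ.ne'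
  set F : ℕ → ℝ → ℂ := fun n u => (u : ℂ) ^ (-z) * ((-(c:ℂ) * u) ^ n / (n.factorial : ℂ)) with hF
  have hdom : ∀ n, IntegrableOn (fun u : ℝ => u ^ (-z.re) * ((c*δ)^n / (n.factorial : ℝ)))
      (Ioc 0 δ) := fun n => (integrableOn_rpow_Ioc hδ (by linarith)).mul_const _
  have hbound : ∀ n, ∀ x ∈ Ioc (0:ℝ) δ, ‖F n x‖ ≤ x ^ (-z.re) * ((c*δ)^n / (n.factorial : ℝ)) := by
    intro n x hx
    rw [hF]
    simp only []
    rw [norm_F hc hx.1, Complex.neg_re]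
    have : (c*x)^n ≤ (c*δ)^n :=
      pow_le_pow_left₀ (mul_nonneg hc.le hx.1.le) (mul_le_mul_of_nonneg_left hx.2 hc.le) n
    have h0 : (0:ℝ) ≤ x ^ (-z.re) := Real.rpow_nonneg hx.1.le _
    have hfac : (0:ℝ) < (n.factorial : ℝ) := by positivity
    gcongr
  have hFmeas : ∀ n, AEStronglyMeasurable (F n) (volume.restrict (Ioc 0 δ)) := by
    intro n
    apply ContinuousOn.aestronglyMeasurable _ measurableSet_Ioc
    apply ContinuousOn.mul
    · intro x hx
      have h : ContinuousAt (fun y : ℂ => y ^ (-z)) (x : ℂ) :=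
        continuousAt_cpow_const <| ofReal_mem_slitPlane.2 hx.1
      exact (h.comp continuous_ofReal.continuousAt).continuousWithinAt
    · fun_prop
  have hFint : ∀ n, Integrable (F n) (volume.restrict (Ioc 0 δ)) := by
    intro n
    apply Integrable.mono' (hdom n) (hFmeas n)
    filter_upwards [ae_restrict_mem measurableSet_Ioc] with x hx
    exact hbound n x hx
  have hsum : Summable fun n => ∫ a, ‖F n a‖ ∂(volume.restrict (Ioc 0 δ)) := by
    refine Summable.of_nonneg_of_le (fun n => integral_nonneg fun a => norm_nonneg _)
      (fun n => ?_)
      (((Real.summable_pow_div_factorial (c*δ)).mul_left (∫ u in Ioc (0:ℝ) δ, u ^ (-z.re))))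
    have : ∫ a, ‖F n a‖ ∂(volume.restrict (Ioc 0 δ))
        ≤ ∫ a in Ioc (0:ℝ) δ, a ^ (-z.re) * ((c*δ)^n / (n.factorial : ℝ)) := by
      apply setIntegral_mono_on (hFint n).norm (hdom n) measurableSet_Ioc
      exact hbound n
    rw [MeasureTheory.integral_mul_const] at this
    linarith
  have hswap := MeasureTheory.integral_tsum_of_summable_integral_norm hFint hsum
  have hpt : ∀ x ∈ Ioc (0:ℝ) δ, ∑' n, F n x = (x : ℂ) ^ (-z) * Complex.exp (-(c:ℂ) * x) := by
    intro x hx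
    rw [hF]
    simp only []
    rw [tsum_mul_left]
    congr 1
    rw [Complex.exp_eq_exp_ℂ, NormedSpace.exp_eq_tsum_div]
  have hterm : ∀ n, ∫ a, F n a ∂(volume.restrict (Ioc 0 δ)) = sT c δ z n := by
    intro n
    have e1 : ∀ x ∈ Ioc (0:ℝ) δ, F n x = ((-(c:ℂ))^n / (n.factorial:ℂ)) * (x:ℂ) ^ ((n:ℂ) - z) := by
      intro x hx
      have hx0 : (x:ℂ) ≠ 0 := Complex.ofReal_ne_zero.2 hx.1.ne'
      rw [hF]
      simp only []
      rw [show (n:ℂ) - z = (n:ℂ) + (-z) from by ring, Complex.cpow_add _ _ hx0,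
        Complex.cpow_natCast, mul_pow]
      ring
    rw [setIntegral_congr_fun measurableSet_Ioc e1, MeasureTheory.integral_const_mul]
    have e2 : ∫ x in Ioc (0:ℝ) δ, (x:ℂ) ^ ((n:ℂ) - z) = ∫ x in (0:ℝ)..δ, (x:ℂ) ^ ((n:ℂ) - z) :=
      (intervalIntegral.integral_of_le hδ.le).symm
    have hre : (-1:ℝ) < ((n:ℂ) - z).re := by
      simp only [Complex.sub_re, Complex.natCast_re]
      have : (0:ℝ) ≤ n := Nat.cast_nonneg n
      linarith
    have hne : (n:ℂ) - z + 1 ≠ 0 := by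
      intro h
      have := congrArg Complex.re h
      simp only [Complex.add_re, Complex.sub_re, Complex.natCast_re, Complex.one_re,
        Complex.zero_re] at this
      have h0 : (0:ℝ) ≤ n := Nat.cast_nonneg n
      linarith
    rw [e2, integral_cpow (Or.inl hre)]
    rw [Complex.ofReal_zero, Complex.zero_cpow hne]
    rw [sT, show (n:ℂ) - z + 1 = (n:ℂ) + (1 - z) from by ring, Complex.cpow_add _ _ hδ0,
      Complex.cpow_natCast, mul_pow]
    have : (n:ℂ) + (1-z) ≠ 0 := by rw [show (n:ℂ) + (1-z) = (n:ℂ) - z + 1 from by ring]; exact hne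
    ring
  rw [S, ← funext hterm]
  rw [hswap]
  exact setIntegral_congr_fun measurableSet_Ioc fun x hx => (hpt x hx).symm


lemma baseCase (hc : 0 < c) (hδ : 0 < δ) (hz : z.re < 1) :
    LI c δ z + S c δ z = (c:ℂ) ^ (z - 1) * Complex.Gamma (1 - z) := by
  have hre : 0 < ((1:ℂ) - z).re := by
    simp only [Complex.sub_re, Complex.one_re]
    linarith
  have key := integral_cpow_mul_exp_neg_mul_Ioi (a := 1 - z) hre hc
  simp_rw [show (1:ℂ) - z - 1 = -z from by ring, ← neg_mul] at key
  have harg : ((c:ℂ)).arg ≠ Real.pi := by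
    rw [Complex.arg_ofReal_of_nonneg hc.le]
    exact Ne.symm Real.pi_ne_zero
  have hcpow : (1/(c:ℂ)) ^ ((1:ℂ) - z) = (c:ℂ) ^ (z - 1) := by
    rw [one_div, Complex.inv_cpow _ _ harg, ← Complex.cpow_neg,
      show -((1:ℂ)-z) = z-1 from by ring]
  have hsplit : (∫ u in Ioc (0:ℝ) δ, (u : ℂ) ^ (-z) * Complex.exp (-(c:ℂ) * u))
      + (∫ u in Ioi δ, (u : ℂ) ^ (-z) * Complex.exp (-(c:ℂ) * u))
      = ∫ u in Ioi (0:ℝ), (u : ℂ) ^ (-z) * Complex.exp (-(c:ℂ) * u) := by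
    rw [← setIntegral_union (Ioc_disjoint_Ioi le_rfl) measurableSet_Ioi
      (integrableOn_Ioc_cpow_mul_exp hc hδ hz) (integrableOn_cpow_mul_exp hc hδ z),
      Ioc_union_Ioi_eq_Ioi hδ.le]
  rw [LI, ← Ioc_eq_S hc hδ hz, add_comm, hsplit, key, hcpow]



noncomputable def K (c δ : ℝ) (z : ℂ) (n : ℕ) : ℂ :=
  Complex.exp (-z * (Real.log δ : ℂ)) * ((c:ℂ) * (δ:ℂ)) ^ n / (n.factorial : ℂ) * (I * (δ:ℂ))

noncomputable def En (z : ℂ) (n : ℕ) : ℂ :=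
  ∫ φ in (-Real.pi)..Real.pi, Complex.exp ((((n:ℂ) + 1 - z) * I) * (φ:ℂ))

lemma norm_K (hc : 0 < c) (hδ : 0 < δ) (n : ℕ) :
    ‖K c δ z n‖ = ‖Complex.exp (-z * (Real.log δ : ℂ))‖ * ((c*δ)^n / (n.factorial : ℝ)) * δ := by
  have e : ((c:ℂ) * (δ:ℂ)) = (((c*δ:ℝ)):ℂ) := by push_cast; ring
  rw [K, norm_mul, norm_div, norm_mul, norm_pow, e, Complex.norm_real, Real.norm_of_nonneg
    (by positivity), Complex.norm_natCast, norm_mul, Complex.norm_I, one_mul,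
    Complex.norm_real, Real.norm_of_nonneg hδ.le]
  ring

lemma summable_norm_K (hc : 0 < c) (hδ : 0 < δ) : Summable (fun n => ‖K c δ z n‖) := by
  refine Summable.congr ?_ (fun n => (norm_K hc hδ n).symm)
  have := ((Real.summable_pow_div_factorial (c*δ)).mul_left
    ‖Complex.exp (-z * (Real.log δ : ℂ))‖).mul_right δ
  exact this

lemma circle_term_eq (hδ : 0 < δ) (z : ℂ) (n : ℕ) (φ : ℝ) :
    Complex.exp (-z * ((Real.log δ : ℂ) + (φ:ℂ) * I)) * (I * (δ:ℂ) * Complex.exp ((φ:ℂ) * I)) *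
      (((c:ℂ) * (δ:ℂ) * Complex.exp ((φ:ℂ) * I)) ^ n / (n.factorial : ℂ))
    = K c δ z n * Complex.exp ((((n:ℂ) + 1 - z) * I) * (φ:ℂ)) := by
  have h1 : Complex.exp (-z * ((Real.log δ : ℂ) + (φ:ℂ) * I))
      = Complex.exp (-z * (Real.log δ : ℂ)) * Complex.exp (-z * ((φ:ℂ) * I)) := by
    rw [← Complex.exp_add]; congr 1; ring
  have h2 : (Complex.exp ((φ:ℂ) * I)) ^ n = Complex.exp ((n:ℂ) * ((φ:ℂ) * I)) :=
    (Complex.exp_nat_mul _ n).symm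
  have h3 : Complex.exp (-z * ((φ:ℂ) * I)) * Complex.exp ((φ:ℂ) * I) *
      Complex.exp ((n:ℂ) * ((φ:ℂ) * I)) = Complex.exp ((((n:ℂ) + 1 - z) * I) * (φ:ℂ)) := by
    rw [← Complex.exp_add, ← Complex.exp_add]; congr 1; ring
  rw [h1, mul_pow, mul_pow, h2, K]
  calc Complex.exp (-z * (Real.log δ:ℂ)) * Complex.exp (-z * ((φ:ℂ) * I)) *
        (I * δ * Complex.exp ((φ:ℂ) * I)) *
        ((c:ℂ)^n * (δ:ℂ)^n * Complex.exp ((n:ℂ) * ((φ:ℂ)*I)) / (n.factorial:ℂ))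
      = Complex.exp (-z * (Real.log δ:ℂ)) * ((c:ℂ)^n * (δ:ℂ)^n) / (n.factorial:ℂ) * (I * δ) *
        (Complex.exp (-z * ((φ:ℂ) * I)) * Complex.exp ((φ:ℂ) * I) *
          Complex.exp ((n:ℂ) * ((φ:ℂ) * I))) := by ring
    _ = _ := by rw [h3]; ring

lemma circle_eq_tsum (hc : 0 < c) (hδ : 0 < δ) (z : ℂ) :
    (∫ φ in (-Real.pi)..Real.pi,
        Complex.exp (-z * ((Real.log δ : ℂ) + (φ:ℂ) * I)) *
          Complex.exp ((c:ℂ) * (δ:ℂ) * Complex.exp ((φ:ℂ) * I)) *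
          (I * (δ:ℂ) * Complex.exp ((φ:ℂ) * I)))
    = ∑' n : ℕ, K c δ z n * En z n := by
  have hpi : (-Real.pi) ≤ Real.pi := by linarith [Real.pi_pos]
  set F : ℕ → ℝ → ℂ := fun n φ => K c δ z n * Complex.exp ((((n:ℂ) + 1 - z) * I) * (φ:ℂ)) with hFdef
  have hpt : ∀ φ : ℝ,
      Complex.exp (-z * ((Real.log δ : ℂ) + (φ:ℂ) * I)) *
        Complex.exp ((c:ℂ) * (δ:ℂ) * Complex.exp ((φ:ℂ) * I)) *
        (I * (δ:ℂ) * Complex.exp ((φ:ℂ) * I)) = ∑' n, F n φ := by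
    intro φ
    have hexp : Complex.exp ((c:ℂ) * (δ:ℂ) * Complex.exp ((φ:ℂ) * I))
        = ∑' n : ℕ, ((c:ℂ) * (δ:ℂ) * Complex.exp ((φ:ℂ) * I)) ^ n / (n.factorial : ℂ) := by
      rw [Complex.exp_eq_exp_ℂ, NormedSpace.exp_eq_tsum_div]
    calc _ = Complex.exp (-z * ((Real.log δ : ℂ) + (φ:ℂ) * I)) *
            (I * (δ:ℂ) * Complex.exp ((φ:ℂ) * I)) *
            Complex.exp ((c:ℂ) * (δ:ℂ) * Complex.exp ((φ:ℂ) * I)) := by ring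
      _ = ∑' n : ℕ, Complex.exp (-z * ((Real.log δ : ℂ) + (φ:ℂ) * I)) *
            (I * (δ:ℂ) * Complex.exp ((φ:ℂ) * I)) *
            (((c:ℂ) * (δ:ℂ) * Complex.exp ((φ:ℂ) * I)) ^ n / (n.factorial : ℂ)) := by
          rw [hexp, tsum_mul_left]
      _ = ∑' n, F n φ := tsum_congr fun n => circle_term_eq hδ z n φ
  have hcont : ∀ n, Continuous (F n) := by
    intro n
    apply continuous_const.mul
    exact (Continuous.mul continuous_const (Complex.continuous_ofReal)).cexp
  have hFint : ∀ n, Integrable (F n) (volume.restrict (Ioc (-Real.pi) Real.pi)) := fun n =>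
    ((hcont n).integrableOn_Ioc (a := -Real.pi) (b := Real.pi))
  have hnormF : ∀ n, ∀ φ : ℝ, φ ∈ Ioc (-Real.pi) Real.pi →
      ‖F n φ‖ ≤ ‖K c δ z n‖ * Real.exp (Real.pi * |z.im|) := by
    intro n φ hφ
    rw [hFdef]
    simp only []
    rw [norm_mul, Complex.norm_exp]
    apply mul_le_mul_of_nonneg_left _ (norm_nonneg _)
    apply Real.exp_le_exp.2
    have : ((((n:ℂ) + 1 - z) * I) * (φ:ℂ)).re = φ * z.im := by
      simp [Complex.mul_re, Complex.mul_im]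
      ring
    rw [this]
    calc φ * z.im ≤ |φ * z.im| := le_abs_self _
      _ = |φ| * |z.im| := abs_mul _ _
      _ ≤ Real.pi * |z.im| := by
          apply mul_le_mul_of_nonneg_right _ (abs_nonneg _)
          rw [abs_le]; exact ⟨hφ.1.le, hφ.2⟩
  have hsum : Summable fun n => ∫ φ, ‖F n φ‖ ∂(volume.restrict (Ioc (-Real.pi) Real.pi)) := by
    refine Summable.of_nonneg_of_le (fun n => integral_nonneg fun a => norm_nonneg _)
      (fun n => ?_)
      (((summable_norm_K hc hδ (z := z)).mul_right (Real.exp (Real.pi * |z.im|))).mul_right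
        ((volume (Ioc (-Real.pi) Real.pi)).toReal))
    have h1 : ∫ φ, ‖F n φ‖ ∂(volume.restrict (Ioc (-Real.pi) Real.pi))
        ≤ ∫ _ in Ioc (-Real.pi) Real.pi, (‖K c δ z n‖ * Real.exp (Real.pi * |z.im|)) := by
      apply setIntegral_mono_on (hFint n).norm (integrableOn_const measure_Ioc_lt_top.ne)
        measurableSet_Ioc
      exact hnormF n
    rw [setIntegral_const, measureReal_def] at h1
    rw [smul_eq_mul] at h1
    linarith [h1]
  have hswap := MeasureTheory.integral_tsum_of_summable_integral_norm hFint hsum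
  have e1 : ∀ n, ∫ φ, F n φ ∂(volume.restrict (Ioc (-Real.pi) Real.pi)) = K c δ z n * En z n := by
    intro n
    rw [hFdef]
    simp only []
    rw [MeasureTheory.integral_const_mul, En, intervalIntegral.integral_of_le hpi]
  rw [intervalIntegral.integral_of_le hpi]
  rw [show (∫ φ in Ioc (-Real.pi) Real.pi,
      Complex.exp (-z * ((Real.log δ : ℂ) + (φ:ℂ) * I)) *
        Complex.exp ((c:ℂ) * (δ:ℂ) * Complex.exp ((φ:ℂ) * I)) *
        (I * (δ:ℂ) * Complex.exp ((φ:ℂ) * I)))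
      = ∫ φ in Ioc (-Real.pi) Real.pi, ∑' n, F n φ from
    setIntegral_congr_fun measurableSet_Ioc fun φ _ => hpt φ]
  rw [← hswap]
  exact tsum_congr e1




lemma exp_neg_nat_pi : Complex.exp (-(((n:ℕ):ℂ) * (Real.pi:ℂ) * I)) = (-1:ℂ)^(n:ℕ) := by
  rw [Complex.exp_neg, show ((n:ℕ):ℂ) * (Real.pi:ℂ) * I = ((n:ℕ):ℂ) * ((Real.pi:ℂ) * I) from by
    ring, Complex.exp_nat_mul, Complex.exp_pi_mul_I]
  rw [inv_eq_of_mul_eq_one_right]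
  rw [← pow_add]
  have : ((-1:ℂ))^(n+n) = ((-1:ℂ)^2)^n := by rw [← pow_mul]; congr 1; ring
  rw [this]
  norm_num

lemma exp_nat_pi : Complex.exp (((n:ℕ):ℂ) * (Real.pi:ℂ) * I) = (-1:ℂ)^(n:ℕ) := by
  rw [show ((n:ℕ):ℂ) * (Real.pi:ℂ) * I = ((n:ℕ):ℂ) * ((Real.pi:ℂ) * I) from by ring,
    Complex.exp_nat_mul, Complex.exp_pi_mul_I]

lemma En_eval (hne : (n:ℂ) + 1 - z ≠ 0) :
    En z n = (-1:ℂ)^n * D z / (((n:ℂ) + 1 - z) * I) := by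
  have h := integral_exp_mul_complex (a := -Real.pi) (b := Real.pi)
    (c := ((n:ℂ) + 1 - z) * I) (mul_ne_zero hne I_ne_zero)
  rw [En, h]
  have e1 : ((n:ℂ) + 1 - z) * I * (Real.pi:ℂ)
      = (((n+1:ℕ):ℂ) * (Real.pi:ℂ) * I) + -(z * (Real.pi:ℂ) * I) := by push_cast; ring
  have e2 : ((n:ℂ) + 1 - z) * I * ((-Real.pi:ℝ):ℂ)
      = -(((n+1:ℕ):ℂ) * (Real.pi:ℂ) * I) + (z * (Real.pi:ℂ) * I) := by push_cast; ring
  rw [e1, e2, Complex.exp_add, Complex.exp_add, exp_nat_pi (n := n+1), exp_neg_nat_pi (n := n+1)]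
  rw [D, pow_succ]
  ring

lemma cpow_one_sub (hδ : 0 < δ) (z : ℂ) :
    (δ:ℂ) ^ ((1:ℂ) - z) = (δ:ℂ) * Complex.exp (-z * (Real.log δ : ℂ)) := by
  have hδ0 : (δ:ℂ) ≠ 0 := Complex.ofReal_ne_zero.2 hδ.ne'
  have hL : Complex.log (δ:ℂ) = ((Real.log δ : ℝ):ℂ) := (Complex.ofReal_log hδ.le).symm
  rw [Complex.cpow_def_of_ne_zero hδ0, hL]
  conv_rhs => rw [show (δ:ℂ) = Complex.exp ((Real.log δ:ℂ)) from by
    rw [← hL, Complex.exp_log hδ0]]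
  rw [← Complex.exp_add]
  congr 1
  ring

lemma K_mul_En (hc : 0 < c) (hδ : 0 < δ) (hne : (n:ℂ) + 1 - z ≠ 0) :
    K c δ z n * En z n = D z * sT c δ z n := by
  rw [En_eval hne, K, sT, cpow_one_sub hδ z]
  have h1 : (-(c:ℂ) * δ)^n = (-1:ℂ)^n * ((c:ℂ) * δ)^n := by
    rw [← neg_pow]; congr 1; ring
  rw [h1]
  have hI : (I:ℂ) ≠ 0 := I_ne_zero
  have hf : (n.factorial:ℂ) ≠ 0 := Nat.cast_ne_zero.2 n.factorial_ne_zero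
  field_simp [hne, hf, hI]

lemma En_self (k : ℕ) : En ((k:ℂ)+1) k = 2 * (Real.pi:ℂ) := by
  rw [En]
  have e : ∀ φ : ℝ, ((((k:ℂ) + 1 - ((k:ℂ)+1)) * I) * (φ:ℂ)) = 0 := by
    intro φ; ring
  simp_rw [e, Complex.exp_zero]
  rw [intervalIntegral.integral_const]
  push_cast
  rw [Complex.real_smul]
  push_cast
  ring

lemma En_ne (k : ℕ) (hn : n ≠ k) : En ((k:ℂ)+1) n = 0 := by
  have hne : (n:ℂ) + 1 - ((k:ℂ)+1) ≠ 0 := by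
    intro h
    apply hn
    have : ((n:ℕ):ℂ) = ((k:ℕ):ℂ) := by linear_combination h
    exact_mod_cast this
  rw [En_eval hne]
  have hD : D ((k:ℂ)+1) = 0 := by
    rw [D]
    have e1 : ((k:ℂ)+1) * (Real.pi:ℂ) * I = ((k+1:ℕ):ℂ) * (Real.pi:ℂ) * I := by push_cast; ring
    rw [e1, exp_nat_pi (n := k+1), exp_neg_nat_pi (n := k+1), sub_self]
  rw [hD]
  simp


lemma GRec (hc : 0 < c) (hδ : 0 < δ) (hz : ∀ n : ℕ, z ≠ (n:ℂ) + 1) :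
    (1 - z) * (LI c δ z + S c δ z) = c * (LI c δ (z-1) + S c δ (z-1)) := by
  have h1 : z ≠ 1 := by simpa using hz 0
  have hl := lineRec hc hδ h1
  have hs := sRec hc hδ hz
  linear_combination hl + hs

lemma Gval (hc : 0 < c) (hδ : 0 < δ) :
    ∀ N : ℕ, ∀ z : ℂ, (∀ n : ℕ, z ≠ (n:ℂ) + 1) → z.re < N + 1 →
      LI c δ z + S c δ z = (c:ℂ) ^ (z - 1) * Complex.Gamma (1 - z) := by
  intro N
  induction N with
  | zero =>
    intro z hz hre
    exact baseCase hc hδ (by push_cast at hre; linarith)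
  | succ N ih =>
    intro z hz hre
    by_cases h : z.re < N + 1
    · exact ih z hz h
    · have hc0 : (c:ℂ) ≠ 0 := Complex.ofReal_ne_zero.2 hc.ne'
      have h1 : z ≠ 1 := by simpa using hz 0
      have h1z : (1:ℂ) - z ≠ 0 := fun hh => h1 (by linear_combination -hh)
      have hz' : ∀ n : ℕ, z - 1 ≠ (n:ℂ) + 1 := by
        intro n hh
        apply hz (n+1)
        push_cast
        linear_combination hh
      have hre' : (z-1).re < N + 1 := by
        simp only [Complex.sub_re, Complex.one_re]
        push_cast at hre
        linarith
      have hG' := ih (z-1) hz' hre'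
      have hrec := GRec hc hδ (z := z) hz
      have hGamma : Complex.Gamma (1 - (z-1)) = (1 - z) * Complex.Gamma (1 - z) := by
        rw [show (1:ℂ) - (z-1) = (1-z) + 1 from by ring, Complex.Gamma_add_one _ h1z]
      have hcpow : (c:ℂ) ^ (z - 1) = (c:ℂ) ^ (z - 1 - 1) * c := by
        have h := Complex.cpow_add (z - 1 - 1) 1 hc0
        rw [Complex.cpow_one] at h
        rw [← h]
        congr 1
        ring
      apply mul_left_cancel₀ h1z
      rw [hrec, hG', hGamma, hcpow]
      ring

lemma cpow_eq_exp_log {u : ℝ} (hu : 0 < u) (s : ℂ) :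
    (u:ℂ) ^ s = Complex.exp (s * (Real.log u : ℂ)) := by
  have hu0 : (u:ℂ) ≠ 0 := Complex.ofReal_ne_zero.2 hu.ne'
  rw [Complex.cpow_def_of_ne_zero hu0, ← Complex.ofReal_log hu.le, mul_comm]

lemma lower_edge (hc : 0 < c) (hδ : 0 < δ) (z : ℂ) :
    (∫ u in Set.Ioi δ, Complex.exp (-z * ((Real.log u : ℂ) - (Real.pi:ℂ) * I)) *
        Complex.exp (-(c:ℂ) * u))
      = Complex.exp (z * (Real.pi:ℂ) * I) * LI c δ z := by
  rw [LI, ← MeasureTheory.integral_const_mul]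
  apply setIntegral_congr_fun measurableSet_Ioi
  intro u hu
  simp only []
  rw [cpow_eq_exp_log (hδ.trans hu) (-z)]
  rw [show -z * ((Real.log u : ℂ) - (Real.pi:ℂ) * I)
      = (z * (Real.pi:ℂ) * I) + (-z * (Real.log u : ℂ)) from by ring, Complex.exp_add]
  ring

lemma upper_edge (hc : 0 < c) (hδ : 0 < δ) (z : ℂ) :
    (∫ u in Set.Ioi δ, Complex.exp (-z * ((Real.log u : ℂ) + (Real.pi:ℂ) * I)) *
        Complex.exp (-(c:ℂ) * u))
      = Complex.exp (-(z * (Real.pi:ℂ) * I)) * LI c δ z := by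
  rw [LI, ← MeasureTheory.integral_const_mul]
  apply setIntegral_congr_fun measurableSet_Ioi
  intro u hu
  simp only []
  rw [cpow_eq_exp_log (hδ.trans hu) (-z)]
  rw [show -z * ((Real.log u : ℂ) + (Real.pi:ℂ) * I)
      = (-(z * (Real.pi:ℂ) * I)) + (-z * (Real.log u : ℂ)) from by ring, Complex.exp_add]
  ring

lemma circle_nat (hc : 0 < c) (hδ : 0 < δ) (k : ℕ) :
    (∫ φ in (-Real.pi)..Real.pi,
        Complex.exp (-((k:ℂ)+1) * ((Real.log δ : ℂ) + (φ:ℂ) * I)) *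
          Complex.exp ((c:ℂ) * (δ:ℂ) * Complex.exp ((φ:ℂ) * I)) *
          (I * (δ:ℂ) * Complex.exp ((φ:ℂ) * I)))
      = 2 * (Real.pi:ℂ) * I * (c:ℂ)^k / (k.factorial : ℂ) := by
  rw [circle_eq_tsum hc hδ ((k:ℂ)+1)]
  rw [tsum_eq_single k (fun n hn => by rw [En_ne k hn, mul_zero])]
  rw [En_self k]
  have hδ0 : (δ:ℂ) ≠ 0 := Complex.ofReal_ne_zero.2 hδ.ne'
  have hexp : Complex.exp (-((k:ℂ)+1) * (Real.log δ : ℂ)) = ((δ:ℂ)^(k+1))⁻¹ := by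
    rw [← cpow_eq_exp_log hδ (-((k:ℂ)+1)), Complex.cpow_neg]
    congr 1
    rw [show ((k:ℂ)+1) = ((k+1:ℕ):ℂ) from by push_cast; ring, Complex.cpow_natCast]
  rw [K, hexp]
  have hf : (k.factorial : ℂ) ≠ 0 := Nat.cast_ne_zero.2 k.factorial_ne_zero
  rw [mul_pow, pow_succ]
  field_simp [hf, hδ0]

theorem main (c : ℝ) (hc : 0 < c) (z : ℂ) (δ : ℝ) (hδ : 0 < δ) :
    (1 / (2 * (Real.pi : ℂ) * Complex.I)) *
      ((∫ u in Set.Ioi δ,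
          Complex.exp (-z * ((Real.log u : ℂ) - (Real.pi : ℂ) * Complex.I)) *
            Complex.exp (-(c : ℂ) * u))
        + (∫ φ in (-Real.pi)..Real.pi,
            Complex.exp (-z * ((Real.log δ : ℂ) + (φ : ℂ) * Complex.I)) *
              Complex.exp ((c : ℂ) * (δ : ℂ) * Complex.exp ((φ : ℂ) * Complex.I)) *
              (Complex.I * (δ : ℂ) * Complex.exp ((φ : ℂ) * Complex.I)))
        - ∫ u in Set.Ioi δ,
            Complex.exp (-z * ((Real.log u : ℂ) + (Real.pi : ℂ) * Complex.I)) *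
              Complex.exp (-(c : ℂ) * u))
      = (c : ℂ) ^ (z - 1) / Complex.Gamma z := by
  have hπ : ((Real.pi : ℝ):ℂ) ≠ 0 := Complex.ofReal_ne_zero.2 Real.pi_ne_zero
  have h2πI : 2 * (Real.pi:ℂ) * I ≠ 0 := by
    apply mul_ne_zero (mul_ne_zero two_ne_zero hπ) I_ne_zero
  rw [lower_edge hc hδ z, upper_edge hc hδ z]
  by_cases hcase : ∃ k : ℕ, z = (k:ℂ) + 1
  · obtain ⟨k, rfl⟩ := hcase
    rw [circle_nat hc hδ k]
    have hD0 : Complex.exp (((k:ℂ)+1) * (Real.pi:ℂ) * I)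
        = Complex.exp (-((((k:ℂ)+1)) * (Real.pi:ℂ) * I)) := by
      have e1 : ((k:ℂ)+1) * (Real.pi:ℂ) * I = ((k+1:ℕ):ℂ) * (Real.pi:ℂ) * I := by push_cast; ring
      rw [e1, exp_nat_pi (n := k+1), exp_neg_nat_pi (n := k+1)]
    rw [hD0]
    have hΓ : Complex.Gamma ((k:ℂ)+1) = (k.factorial : ℂ) := Complex.Gamma_nat_eq_factorial k
    have hcpow : (c:ℂ) ^ ((k:ℂ) + 1 - 1) = (c:ℂ)^k := by
      rw [show (k:ℂ) + 1 - 1 = ((k:ℕ):ℂ) from by ring, Complex.cpow_natCast]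
    rw [hΓ, hcpow]
    have hf : (k.factorial : ℂ) ≠ 0 := Nat.cast_ne_zero.2 k.factorial_ne_zero
    field_simp
    ring
  · push_neg at hcase
    rw [circle_eq_tsum hc hδ z]
    have htsum : ∑' n : ℕ, K c δ z n * En z n = D z * S c δ z := by
      rw [S, ← tsum_mul_left]
      refine tsum_congr fun n => ?_
      have hne : (n:ℂ) + 1 - z ≠ 0 := fun h => hcase n (by linear_combination -h)
      exact K_mul_En hc hδ hne
    rw [htsum]
    have hG := Gval hc hδ ⌈z.re⌉₊ z hcase (by
      have := Nat.le_ceil z.re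
      push_cast
      linarith)
    have hcomb : Complex.exp (z * (Real.pi:ℂ) * I) * LI c δ z + D z * S c δ z -
        Complex.exp (-(z * (Real.pi:ℂ) * I)) * LI c δ z = D z * (LI c δ z + S c δ z) := by
      rw [D]; ring
    rw [hcomb, hG]
    by_cases hΓ : Complex.Gamma z = 0
    · obtain ⟨m, hm⟩ := (Complex.Gamma_eq_zero_iff z).1 hΓ
      have hD0 : D z = 0 := by
        rw [D, hm]
        have e1 : -((m:ℕ):ℂ) * (Real.pi:ℂ) * I = -(((m:ℕ):ℂ) * (Real.pi:ℂ) * I) := by ring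
        have e2 : -((-((m:ℕ):ℂ)) * (Real.pi:ℂ) * I) = ((m:ℕ):ℂ) * (Real.pi:ℂ) * I := by ring
        rw [e2, e1, exp_nat_pi, exp_neg_nat_pi, sub_self]
      rw [hD0, hΓ, div_zero]
      ring
    · have hrefl := Complex.Gamma_mul_Gamma_one_sub z
      have hsin : Complex.sin ((Real.pi:ℂ) * z) ≠ 0 := by
        intro h0
        rw [h0, div_zero] at hrefl
        rcases mul_eq_zero.1 hrefl with h | h
        · exact hΓ h
        · obtain ⟨m, hm⟩ := (Complex.Gamma_eq_zero_iff _).1 h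
          apply hcase m
          push_cast at hm ⊢
          linear_combination -hm
      have hD : D z = 2 * I * Complex.sin ((Real.pi:ℂ) * z) := by
        rw [Complex.sin, D]
        have e1 : -((Real.pi:ℂ) * z) * I = -(z * (Real.pi:ℂ) * I) := by ring
        have e2 : (Real.pi:ℂ) * z * I = z * (Real.pi:ℂ) * I := by ring
        rw [e1, e2]
        have hI : I * I = -1 := Complex.I_mul_I
        field_simp
        linear_combination (Complex.exp (z * (Real.pi:ℂ) * I) -
          Complex.exp (-(z * (Real.pi:ℂ) * I))) * hI
      have hkey : Complex.sin ((Real.pi:ℂ) * z) * (Complex.Gamma z * Complex.Gamma (1-z))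
          = (Real.pi:ℂ) := by
        rw [hrefl]
        field_simp
      rw [hD]
      rw [eq_div_iff hΓ]
      field_simp
      linear_combination (c:ℂ)^(z-1) * hkey

end Hankel11

theorem stmt11 (c : ℝ) (hc : 0 < c) (z : ℂ) (δ : ℝ) (hδ : 0 < δ) :
    (1 / (2 * (Real.pi : ℂ) * Complex.I)) *
      ((∫ u in Set.Ioi δ,
          Complex.exp (-z * ((Real.log u : ℂ) - (Real.pi : ℂ) * Complex.I)) *
            Complex.exp (-(c : ℂ) * u))
        + (∫ φ in (-Real.pi)..Real.pi,
            Complex.exp (-z * ((Real.log δ : ℂ) + (φ : ℂ) * Complex.I)) *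
              Complex.exp ((c : ℂ) * (δ : ℂ) * Complex.exp ((φ : ℂ) * Complex.I)) *
              (Complex.I * (δ : ℂ) * Complex.exp ((φ : ℂ) * Complex.I)))
        - ∫ u in Set.Ioi δ,
            Complex.exp (-z * ((Real.log u : ℂ) + (Real.pi : ℂ) * Complex.I)) *
              Complex.exp (-(c : ℂ) * u))
      = (c : ℂ) ^ (z - 1) / Complex.Gamma z :=
  Hankel11.main c hc z δ hδ
end

section
/- Let α be a complex number with |α| > 0, choose log α with Im(log α) ∈ (−π, π], and let s ∈ ℂ with Re(s) > log|α|. Then the regularized product over ν ∈ ℤ of (s − (log α + 2πiν)) equals 1 − α e^{−s}. -/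
open MeasureTheory Set Filter Topology FourierTransform Real Asymptotics

namespace Stmt17

lemma integrableOn_rpow_exp {c : ℝ} (hc : -1 < c) {r : ℝ} (hr : 0 < r) :
    IntegrableOn (fun t : ℝ => t ^ c * Real.exp (-r * t)) (Ioi 0) := by
  have h0 : 0 < c + 1 := by linarith
  have := Real.GammaIntegral_convergent h0
  rw [← mul_zero r, ← integrableOn_Ioi_comp_mul_left_iff _ _ hr] at this
  have h2 : IntegrableOn
      (fun x => r ^ (-c) * Real.exp 0 * (Real.exp (-(r * x)) * (r * x) ^ (c + 1 - 1)))
      (Ioi 0) := this.const_mul _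
  refine h2.congr_fun (fun t ht => ?_) measurableSet_Ioi
  rw [mem_Ioi] at ht
  beta_reduce
  have hrr : r ^ (-c) * r ^ c = 1 := by rw [← Real.rpow_add hr]; simp
  rw [add_sub_cancel_right, Real.mul_rpow hr.le ht.le, Real.exp_zero, mul_one, neg_mul,
    show r ^ (-c) * (Real.exp (-(r * t)) * (r ^ c * t ^ c))
      = r ^ (-c) * r ^ c * (t ^ c * Real.exp (-(r * t))) from by ring, hrr, one_mul]

lemma integrable_cpow_exp {w : ℂ} (hw : 0 < w.re) {b : ℂ} (hb : 0 < b.re) :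
    IntegrableOn (fun t : ℝ => (t : ℂ) ^ (w - 1) * Complex.exp (-b * t)) (Ioi 0) := by
  have hmeas : AEStronglyMeasurable (fun t : ℝ => (t : ℂ) ^ (w - 1) * Complex.exp (-b * t))
      (volume.restrict (Ioi 0)) := by
    refine (ContinuousOn.aestronglyMeasurable ?_ measurableSet_Ioi)
    refine ContinuousOn.mul ?_ (Continuous.continuousOn (by fun_prop))
    intro t ht
    exact (Complex.continuousAt_ofReal_cpow_const t _ (Or.inr (ne_of_gt ht))).continuousWithinAt
  refine Integrable.mono' (integrableOn_rpow_exp (by linarith [hw] : (-1:ℝ) < w.re - 1) hb) hmeas ?_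
  filter_upwards [ae_restrict_mem measurableSet_Ioi] with t ht
  rw [mem_Ioi] at ht
  rw [norm_mul, Complex.norm_exp,
    Complex.norm_cpow_eq_rpow_re_of_pos ht, Complex.sub_re, Complex.one_re]
  have : (-b * t).re = -b.re * t := by simp [Complex.mul_re]
  rw [this]



lemma integral_cpow_mul_exp_complex {w : ℂ} (hw : 0 < w.re) {b : ℂ} (hb : 0 < b.re) :
    ∫ t in Ioi (0:ℝ), (t : ℂ) ^ (w - 1) * Complex.exp (-b * t)
      = Complex.Gamma w * b ^ (-w) := by
  set U : Set ℂ := {z : ℂ | 0 < z.re} with hUdef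
  have hUopen : IsOpen U := isOpen_lt continuous_const Complex.continuous_re
  have hUconn : IsPreconnected U := (convex_halfSpace_re_gt 0).isPreconnected
  set F : ℂ → ℂ := fun z => ∫ t in Ioi (0:ℝ), (t : ℂ) ^ (w - 1) * Complex.exp (-z * t) with hFdef
  set G : ℂ → ℂ := fun z => Complex.Gamma w * z ^ (-w) with hGdef
  -- F is differentiable on U
  have hFdiff : ∀ z ∈ U, DifferentiableAt ℂ F z := by
    intro z hz
    have hzre : 0 < z.re := hz
    set ε : ℝ := z.re / 2 with hε
    have hε0 : 0 < ε := by positivity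
    have key := hasDerivAt_integral_of_dominated_loc_of_deriv_le (μ := volume.restrict (Ioi 0))
      (F := fun z (t : ℝ) => (t : ℂ) ^ (w - 1) * Complex.exp (-z * t))
      (F' := fun z (t : ℝ) => (t : ℂ) ^ (w - 1) * (-t * Complex.exp (-z * t)))
      (bound := fun t : ℝ => t ^ w.re * Real.exp (-ε * t))
      (x₀ := z) (Metric.ball_mem_nhds z hε0) ?_ ?_ ?_ ?_ ?_ ?_
    · exact key.2.differentiableAt
    · filter_upwards with x
      refine ((ContinuousOn.mul (fun t ht => (Complex.continuousAt_ofReal_cpow_const t _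
        (Or.inr (ne_of_gt ht))).continuousWithinAt)
        (Continuous.continuousOn (by fun_prop))).aestronglyMeasurable measurableSet_Ioi)
    · exact integrable_cpow_exp hw (by simpa using hzre)
    · refine (ContinuousOn.aestronglyMeasurable ?_ measurableSet_Ioi)
      refine ContinuousOn.mul ?_ (Continuous.continuousOn (by fun_prop))
      intro t ht
      exact (Complex.continuousAt_ofReal_cpow_const t _ (Or.inr (ne_of_gt ht))).continuousWithinAt
    · filter_upwards [ae_restrict_mem measurableSet_Ioi] with t ht x hx
      rw [mem_Ioi] at ht
      rw [Metric.mem_ball, Complex.dist_eq] at hx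
      have hxre : ε ≤ x.re := by
        have := Complex.abs_re_le_norm (x - z)
        rw [Complex.sub_re] at this
        have := abs_le.mp (this.trans hx.le) |>.1
        simp only [hε] at *
        linarith
      rw [norm_mul, norm_mul,
        Complex.norm_cpow_eq_rpow_re_of_pos ht, Complex.sub_re, Complex.one_re,
        Complex.norm_exp]
      have h1 : (-x * t).re = -x.re * t := by simp [Complex.mul_re]
      rw [h1, norm_neg, Complex.norm_real, Real.norm_eq_abs, abs_of_pos ht]
      have ht1 : t ^ (w.re - 1) * t = t ^ w.re := by
        nth_rewrite 2 [← Real.rpow_one t]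
        rw [← Real.rpow_add ht]
        ring_nf
      calc t ^ (w.re - 1) * (t * Real.exp (-x.re * t))
          = t ^ w.re * Real.exp (-x.re * t) := by rw [← mul_assoc, ht1]
        _ ≤ t ^ w.re * Real.exp (-ε * t) := by
            refine mul_le_mul_of_nonneg_left (Real.exp_le_exp.mpr ?_) (Real.rpow_nonneg ht.le _)
            nlinarith
    · exact integrableOn_rpow_exp (by linarith) hε0
    · filter_upwards [ae_restrict_mem measurableSet_Ioi] with t ht x hx
      have : HasDerivAt (fun z : ℂ => Complex.exp (-z * t)) (-t * Complex.exp (-x * t)) x := by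
        have h1 : HasDerivAt (fun z : ℂ => -z * t) (-t : ℂ) x := by
          simpa using ((hasDerivAt_id x).neg.mul_const (t : ℂ))
        simpa [mul_comm, Function.comp_def] using (Complex.hasDerivAt_exp (-x * t)).comp x h1
      simpa [mul_comm] using this.const_mul ((t : ℂ) ^ (w - 1))
  have hGdiff : ∀ z ∈ U, DifferentiableAt ℂ G z := by
    intro z hz
    refine (differentiableAt_id.cpow (differentiableAt_const _) ?_).const_mul _
    exact Or.inl hz
  have hreal : ∀ r : ℝ, 0 < r → F r = G r := by
    intro r hr
    have h1 := Complex.integral_cpow_mul_exp_neg_mul_Ioi hw hr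
    have h2 : F r = ∫ t in Ioi (0:ℝ), (t : ℂ) ^ (w - 1) * Complex.exp (-((r:ℂ) * t)) := by
      simp only [hFdef, neg_mul]
    rw [h2, h1, hGdef]
    rw [one_div, Complex.inv_cpow _ _ (by
      rw [Complex.arg_ofReal_of_nonneg hr.le]; exact Real.pi_ne_zero.symm),
      ← Complex.cpow_neg, mul_comm]
  -- identity theorem
  have hFan : AnalyticOnNhd ℂ F U := by
    refine DifferentiableOn.analyticOnNhd (fun z hz => (hFdiff z hz).differentiableWithinAt) hUopen
  have hGan : AnalyticOnNhd ℂ G U := by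
    refine DifferentiableOn.analyticOnNhd (fun z hz => (hGdiff z hz).differentiableWithinAt) hUopen
  have hfreq : ∃ᶠ z in 𝓝[≠] (1 : ℂ), F z = G z := by
    have htend : Tendsto (fun n : ℕ => (1 + (n+1 : ℝ)⁻¹ : ℂ)) atTop (𝓝[≠] (1 : ℂ)) := by
      rw [tendsto_nhdsWithin_iff]
      constructor
      · have : Tendsto (fun n : ℕ => ((n:ℝ)+1)⁻¹) atTop (𝓝 0) := by
          exact tendsto_one_div_add_atTop_nhds_zero_nat.congr (by intro n; rw [one_div])
        have := ((Complex.continuous_ofReal.tendsto 0).comp this).const_add (1 : ℂ)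
        simpa using this
      · filter_upwards with n
        simp only [mem_compl_iff, mem_singleton_iff]
        intro h
        have h2 : (((n:ℝ)+1)⁻¹ : ℂ) = 0 := by
          have := sub_eq_zero.mpr h
          push_cast at this ⊢
          linear_combination this
        rw [inv_eq_zero] at h2
        exact (Nat.cast_add_one_ne_zero n : ((n:ℂ)+1) ≠ 0) (by exact_mod_cast h2)
    refine htend.frequently (Frequently.of_forall fun n => ?_)
    have hpos : (0:ℝ) < 1 + ((n:ℝ)+1)⁻¹ := by positivity
    have := hreal _ hpos
    simpa [Complex.ofReal_add, Complex.ofReal_inv] using this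
  have := hFan.eqOn_of_preconnected_of_frequently_eq hGan hUconn (by simp [hUdef] : (1:ℂ) ∈ U) hfreq
  exact this hb

lemma summable_aux {c r : ℝ} (hr0 : 0 < r) (hr : r < 1) :
    Summable (fun n : ℕ => ((n : ℝ) + 1) ^ c * r ^ (n + 1)) := by
  set k : ℕ := ⌈max c 0⌉₊ with hk
  have h1 : Summable (fun n : ℕ => (n : ℝ) ^ k * r ^ n) := by
    have := summable_pow_mul_geometric_of_norm_lt_one (R := ℝ) k
      (r := r) (by rwa [Real.norm_eq_abs, abs_of_pos hr0])
    exact this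
  have h2 : Summable (fun n : ℕ => ((n + 1 : ℕ) : ℝ) ^ k * r ^ (n + 1)) :=
    h1.comp_injective (add_left_injective 1)
  refine Summable.of_nonneg_of_le (fun n => mul_nonneg (Real.rpow_nonneg (by positivity) _) (pow_nonneg hr0.le _)) (fun n => ?_) h2
  have hb : (1:ℝ) ≤ (n : ℝ) + 1 := by linarith [Nat.cast_nonneg (α := ℝ) n]
  have : ((n : ℝ) + 1) ^ c ≤ ((n : ℝ) + 1) ^ (k : ℝ) := by
    apply Real.rpow_le_rpow_of_exponent_le hb
    exact le_trans (le_max_left c 0) (Nat.le_ceil _)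
  refine mul_le_mul_of_nonneg_right ?_ (by positivity)
  rw [Real.rpow_natCast] at this
  push_cast
  exact this

lemma norm_cpow_le {z w : ℂ} (hz : z ≠ 0) :
    ‖z ^ (-w)‖ ≤ ‖z‖ ^ (-w.re) * Real.exp (Real.pi * |w.im|) := by
  rw [Complex.norm_cpow_of_ne_zero hz, Complex.neg_re, Complex.neg_im,
    div_eq_mul_inv, ← Real.exp_neg]
  refine mul_le_mul_of_nonneg_left (Real.exp_le_exp.mpr ?_) (Real.rpow_nonneg (by positivity) _)
  have h1 : |z.arg * -w.im| ≤ π * |w.im| := by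
    rw [abs_mul, abs_neg]
    exact mul_le_mul_of_nonneg_right (Complex.abs_arg_le_pi z) (abs_nonneg _)
  calc -(z.arg * -w.im) ≤ |z.arg * -w.im| := neg_le_abs _
    _ ≤ π * |w.im| := h1

lemma summable_int_cpow {a w : ℂ} (ha : 0 < a.re) (hw : 1 < w.re) :
    Summable (fun n : ℤ => (a + 2 * (π:ℂ) * Complex.I * n) ^ (-w)) := by
  have hz : ∀ n : ℤ, a + 2 * (π:ℂ) * Complex.I * n ≠ 0 := by
    intro n h
    have : (a + 2 * (π:ℂ) * Complex.I * n).re = a.re := by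
      simp [Complex.add_re, Complex.mul_re, Complex.mul_im]
    rw [h] at this
    simp at this
    linarith
  refine Summable.of_norm_bounded_eventually
    (g := fun n : ℤ => Real.exp (Real.pi * |w.im|) * |(n:ℝ)| ^ (-w.re)) ?_ ?_
  · exact (Real.summable_abs_int_rpow hw).mul_left _
  · have : ∀ᶠ n : ℤ in cofinite, ‖a‖ ≤ |(n:ℝ)| := by
      rw [Int.cofinite_eq]
      constructor
      · filter_upwards [eventually_le_atBot (-⌈‖a‖⌉ : ℤ)] with n hn
        have : (‖a‖ : ℝ) ≤ -(n:ℝ) := by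
          have h1 : (n:ℝ) ≤ -⌈‖a‖⌉ := by exact_mod_cast hn
          have := Int.le_ceil (‖a‖)
          push_cast at h1 ⊢
          linarith
        calc ‖a‖ ≤ -(n:ℝ) := this
          _ ≤ |(n:ℝ)| := neg_le_abs _
      · filter_upwards [eventually_ge_atTop (⌈‖a‖⌉ : ℤ)] with n hn
        have h1 : (⌈‖a‖⌉ : ℝ) ≤ (n:ℝ) := by exact_mod_cast hn
        have := Int.le_ceil (‖a‖)
        calc ‖a‖ ≤ (n:ℝ) := by push_cast at h1 ⊢; linarith
          _ ≤ |(n:ℝ)| := le_abs_self _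
    have this2 : ∀ᶠ n : ℤ in cofinite, n ≤ -1 ∨ 1 ≤ n := by
      rw [Int.cofinite_eq, eventually_sup]
      exact ⟨(eventually_le_atBot (-1 : ℤ)).mono fun n h => Or.inl h,
        (eventually_ge_atTop (1 : ℤ)).mono fun n h => Or.inr h⟩
    filter_upwards [this, this2] with n hn hn1
    have habs : |(n:ℝ)| ≤ ‖a + 2 * (π:ℂ) * Complex.I * n‖ := by
      have h2 : ‖2 * (π:ℂ) * Complex.I * n‖ = 2 * π * |(n:ℝ)| := by
        rw [norm_mul, norm_mul, norm_mul, Complex.norm_I, Complex.norm_intCast]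
        have : ‖(π:ℂ)‖ = π := by
          rw [Complex.norm_real, Real.norm_eq_abs, abs_of_pos Real.pi_pos]
        rw [this]
        simp [mul_comm]
      have h3 : ‖2 * (π:ℂ) * Complex.I * n‖
          ≤ ‖a + 2 * (π:ℂ) * Complex.I * n‖ + ‖a‖ := by
        have h4 := norm_sub_le (a + 2 * (π:ℂ) * Complex.I * n) a
        simpa using h4
      have hpi := Real.pi_gt_three
      have habsn : (0:ℝ) ≤ |(n:ℝ)| := abs_nonneg _
      nlinarith [hn]
    calc ‖(a + 2 * (π:ℂ) * Complex.I * n) ^ (-w)‖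
        ≤ ‖a + 2 * (π:ℂ) * Complex.I * n‖ ^ (-w.re) * Real.exp (π * |w.im|) :=
          norm_cpow_le (hz n)
      _ ≤ |(n:ℝ)| ^ (-w.re) * Real.exp (π * |w.im|) := by
          refine mul_le_mul_of_nonneg_right ?_ (Real.exp_nonneg _)
          have hn0 : (0:ℝ) < |(n:ℝ)| := by
            rcases hn1 with h | h
            · have : (n:ℝ) ≤ -1 := by exact_mod_cast h
              rw [abs_pos]; linarith
            · have : (1:ℝ) ≤ (n:ℝ) := by exact_mod_cast h
              rw [abs_pos]; linarith
          rw [Real.rpow_neg (hn0.trans_le habs).le, Real.rpow_neg hn0.le]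
          exact inv_anti₀ (Real.rpow_pos_of_pos hn0 _)
            (Real.rpow_le_rpow hn0.le habs (by linarith))
      _ = Real.exp (π * |w.im|) * |(n:ℝ)| ^ (-w.re) := mul_comm _ _

lemma re_shift (a : ℂ) (n : ℤ) : (a + 2 * (π:ℂ) * Complex.I * n).re = a.re := by
  simp [Complex.add_re, Complex.mul_re, Complex.mul_im]

lemma poisson_key {a w : ℂ} (ha : 0 < a.re) (hw : 1 < w.re) :
    Complex.Gamma w * ∑' n : ℤ, (a + 2 * (π:ℂ) * Complex.I * n) ^ (-w)
      = ∑' n : ℕ, ((n:ℂ) + 1) ^ (w - 1) * Complex.exp (-a * ((n:ℂ) + 1)) := by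
  set f : ℝ → ℂ :=
    fun t => Set.indicator (Ioi (0:ℝ)) (fun t : ℝ => (t:ℂ) ^ (w - 1) * Complex.exp (-a * t)) t
    with hfdef
  have hw0 : 0 < w.re := by linarith
  -- continuity
  have hc : Continuous f := by
    rw [continuous_iff_continuousAt]
    intro t₀
    rcases lt_trichotomy t₀ 0 with h | h | h
    · have : f =ᶠ[𝓝 t₀] (fun _ => 0) := by
        filter_upwards [Iio_mem_nhds h] with t ht
        exact Set.indicator_of_notMem (by simp [mem_Ioi]; rw [mem_Iio] at ht; linarith) _
      exact ContinuousAt.congr continuousAt_const this.symm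
    · subst h
      have hf0 : f 0 = 0 := Set.indicator_of_notMem (by simp) _
      rw [ContinuousAt, hf0]
      have hbound : ∀ t : ℝ, ‖f t‖ ≤ |t| ^ (w.re - 1) * Real.exp (|a.re| * |t|) := by
        intro t
        by_cases ht : t ∈ Ioi (0:ℝ)
        · rw [hfdef]
          simp only [Set.indicator_of_mem ht]
          rw [mem_Ioi] at ht
          rw [norm_mul, Complex.norm_cpow_eq_rpow_re_of_pos ht,
            Complex.sub_re, Complex.one_re, Complex.norm_exp]
          have h1 : (-a * t).re = -a.re * t := by simp [Complex.mul_re]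
          rw [h1, abs_of_pos ht]
          refine mul_le_mul_of_nonneg_left (Real.exp_le_exp.mpr ?_) (Real.rpow_nonneg ht.le _)
          exact mul_le_mul_of_nonneg_right (neg_le_abs _) ht.le
        · rw [hfdef]
          simp only [Set.indicator_of_notMem ht, norm_zero]
          positivity
      refine squeeze_zero_norm hbound ?_
      have h1 : Tendsto (fun t : ℝ => |t| ^ (w.re - 1)) (𝓝 0) (𝓝 0) := by
        have hco : ContinuousAt (fun x : ℝ => x ^ (w.re - 1)) 0 :=
          Real.continuousAt_rpow_const 0 _ (Or.inr (by linarith))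
        have habs : Tendsto (fun t : ℝ => |t|) (𝓝 0) (𝓝 0) := by
          simpa using continuous_abs.tendsto (0:ℝ)
        have := hco.tendsto.comp habs
        simpa [Function.comp_def, Real.zero_rpow (by linarith : w.re - 1 ≠ 0)] using this
      have h2 : Tendsto (fun t : ℝ => Real.exp (|a.re| * |t|)) (𝓝 0) (𝓝 1) := by
        have hcont : Continuous (fun t : ℝ => Real.exp (|a.re| * |t|)) := by fun_prop
        simpa using hcont.tendsto (0:ℝ)
      have := h1.mul h2
      simpa using this
    · have : f =ᶠ[𝓝 t₀] (fun t : ℝ => (t:ℂ) ^ (w - 1) * Complex.exp (-a * t)) := by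
        filter_upwards [Ioi_mem_nhds h] with t ht
        exact Set.indicator_of_mem ht _
      refine ContinuousAt.congr ?_ this.symm
      exact ((Complex.continuousAt_ofReal_cpow_const t₀ _ (Or.inr (ne_of_gt h))).mul
        (Continuous.continuousAt (by fun_prop)))
  -- decay
  have hbig : f =O[cocompact ℝ] (fun x : ℝ => |x| ^ (-2:ℝ)) := by
    rw [cocompact_eq_atBot_atTop]
    refine IsBigO.sup ?_ ?_
    · rw [isBigO_iff]
      refine ⟨1, ?_⟩
      filter_upwards [eventually_lt_atBot (0:ℝ)] with t ht
      rw [hfdef]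
      simp only [Set.indicator_of_notMem (by simpa [mem_Ioi] using ht.le.not_gt : t ∉ Ioi (0:ℝ))]
      simp only [norm_zero, one_mul]
      positivity
    · rw [isBigO_iff]
      refine ⟨1, ?_⟩
      have htend : Tendsto (fun t : ℝ => t ^ (w.re + 1) * Real.exp (-a.re * t)) atTop (𝓝 0) :=
        tendsto_rpow_mul_exp_neg_mul_atTop_nhds_zero _ _ ha
      filter_upwards [htend.eventually_lt_const zero_lt_one, eventually_ge_atTop (1:ℝ)]
        with t hlt hge
      have ht : (0:ℝ) < t := by linarith
      rw [hfdef]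
      simp only [Set.indicator_of_mem (mem_Ioi.mpr ht)]
      rw [norm_mul, Complex.norm_cpow_eq_rpow_re_of_pos ht,
        Complex.sub_re, Complex.one_re, Complex.norm_exp]
      have h1 : (-a * t).re = -a.re * t := by simp [Complex.mul_re]
      rw [h1]
      have key : t ^ (w.re - 1) = t ^ (w.re + 1) * t ^ (-2:ℝ) := by
        rw [← Real.rpow_add ht]; ring_nf
      rw [key, norm_of_nonneg (Real.rpow_nonneg (abs_nonneg t) _), abs_of_pos ht, one_mul,
        mul_assoc, mul_comm (t ^ (-2:ℝ)), ← mul_assoc]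
      have := mul_le_mul_of_nonneg_right hlt.le (Real.rpow_nonneg ht.le (-2:ℝ))
      simpa using this
  -- Fourier transform values
  have hFf : ∀ n : ℤ, 𝓕 f n = Complex.Gamma w * (a + 2 * (π:ℂ) * Complex.I * n) ^ (-w) := by
    intro n
    rw [Real.fourier_real_eq_integral_exp_smul]
    have hcongr : ∀ v : ℝ, Complex.exp (↑(-2 * π * v * (n:ℝ)) * Complex.I) • f v
        = Set.indicator (Ioi (0:ℝ))
            (fun t : ℝ => (t:ℂ) ^ (w - 1)
              * Complex.exp (-(a + 2 * (π:ℂ) * Complex.I * n) * t)) v := by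
      intro v
      by_cases hv : v ∈ Ioi (0:ℝ)
      · rw [hfdef]
        simp only [Set.indicator_of_mem hv, smul_eq_mul]
        rw [mul_comm, mul_assoc, ← Complex.exp_add]
        congr 2
        push_cast
        ring
      · rw [hfdef]
        simp only [Set.indicator_of_notMem hv, smul_zero]
    rw [show (fun v : ℝ => Complex.exp (↑(-2 * π * v * (n:ℝ)) * Complex.I) • f v)
        = Set.indicator (Ioi (0:ℝ)) (fun t : ℝ => (t:ℂ) ^ (w - 1)
            * Complex.exp (-(a + 2 * (π:ℂ) * Complex.I * n) * t)) from funext hcongr]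
    rw [integral_indicator measurableSet_Ioi]
    exact integral_cpow_mul_exp_complex hw0 (by rw [re_shift]; exact ha)
  -- summability of Fourier coefficients
  have hFsum : Summable (fun n : ℤ => 𝓕 f n) := by
    rw [show (fun n : ℤ => 𝓕 f n)
      = fun n : ℤ => Complex.Gamma w * (a + 2 * (π:ℂ) * Complex.I * n) ^ (-w) from funext hFf]
    exact (summable_int_cpow ha hw).mul_left _
  -- Poisson summation
  have hps := Real.tsum_eq_tsum_fourier_of_rpow_decay_of_summable hc one_lt_two hbig
    hFsum 0
  -- compute the two sides
  have hlhs : ∑' n : ℤ, f (0 + (n:ℝ))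
      = ∑' n : ℕ, ((n:ℂ) + 1) ^ (w - 1) * Complex.exp (-a * ((n:ℂ) + 1)) := by
    have he : Function.Injective (fun n : ℕ => (n:ℤ) + 1) := by
      intro m n h; simpa using h
    have hrange : Function.support (fun m : ℤ => f (0 + (m:ℝ)))
        ⊆ Set.range (fun n : ℕ => (n:ℤ) + 1) := by
      intro m hm
      by_contra hcon
      apply hm
      have hm0 : m ≤ 0 := by
        by_contra hcon2
        push_neg at hcon2
        refine hcon ⟨(m - 1).toNat, ?_⟩
        simp only []
        omega
      simp only [zero_add]
      refine Set.indicator_of_notMem ?_ _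
      simp only [mem_Ioi, not_lt]
      exact_mod_cast hm0
    rw [← Function.Injective.tsum_eq he hrange]
    refine tsum_congr fun n => ?_
    simp only [zero_add]
    have hmem : ((((n:ℤ) + 1 : ℤ)) : ℝ) ∈ Ioi (0:ℝ) := by
      rw [mem_Ioi]; push_cast; positivity
    rw [hfdef]
    simp only [Set.indicator_of_mem hmem]
    push_cast
    ring_nf
  have hrhs : ∑' n : ℤ, 𝓕 f n * fourier n ((0:ℝ) : UnitAddCircle)
      = Complex.Gamma w * ∑' n : ℤ, (a + 2 * (π:ℂ) * Complex.I * n) ^ (-w) := by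
    rw [← tsum_mul_left]
    refine tsum_congr fun n => ?_
    rw [hFf n]
    simp [QuotientAddGroup.mk_zero, fourier_eval_zero, mul_one]
  rw [← hrhs, ← hps, hlhs]

lemma term_norm (a : ℂ) (n : ℕ) (z : ℂ) :
    ‖((n:ℂ) + 1) ^ (z - 1) * Complex.exp (-a * ((n:ℂ) + 1))‖
      = ((n:ℝ) + 1) ^ (z.re - 1) * Real.exp (-a.re) ^ (n + 1) := by
  have hpos : (0:ℝ) < (n:ℝ) + 1 := by positivity
  have hcast : ((n:ℂ) + 1) = (((n:ℝ) + 1 : ℝ) : ℂ) := by push_cast; ring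
  have h1 : (-a * ((n:ℂ) + 1)).re = ((n:ℝ) + 1) * (-a.re) := by
    simp [Complex.mul_re, Complex.add_re, Complex.add_im]
    ring
  have e1 : ‖((n:ℂ) + 1) ^ (z - 1)‖ = ((n:ℝ) + 1) ^ (z.re - 1) := by
    rw [hcast, Complex.norm_cpow_eq_rpow_re_of_pos hpos,
      Complex.sub_re, Complex.one_re]
  have e2 : ‖Complex.exp (-a * ((n:ℂ) + 1))‖ = Real.exp (-a.re) ^ (n + 1) := by
    rw [Complex.norm_exp, h1,
      show ((n:ℝ) + 1) = ((n + 1 : ℕ) : ℝ) by push_cast; ring, Real.exp_nat_mul]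
  rw [norm_mul, e1, e2]

lemma G_diff {a : ℂ} (ha : 0 < a.re) :
    DifferentiableOn ℂ
      (fun z : ℂ => ∑' n : ℕ, ((n:ℂ) + 1) ^ (z - 1) * Complex.exp (-a * ((n:ℂ) + 1)))
      {z : ℂ | z.re < 2} := by
  have hopen : IsOpen {z : ℂ | z.re < 2} := isOpen_lt Complex.continuous_re continuous_const
  have hr0 : (0:ℝ) < Real.exp (-a.re) := Real.exp_pos _
  have hr1 : Real.exp (-a.re) < 1 := Real.exp_lt_one_iff.mpr (by linarith)
  have hu : Summable (fun n : ℕ => ((n:ℝ) + 1) ^ (1:ℝ) * Real.exp (-a.re) ^ (n + 1)) :=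
    summable_aux hr0 hr1
  have htuo : TendstoUniformlyOn
      (fun (t : Finset ℕ) (z : ℂ) =>
        ∑ n ∈ t, ((n:ℂ) + 1) ^ (z - 1) * Complex.exp (-a * ((n:ℂ) + 1)))
      (fun z : ℂ => ∑' n : ℕ, ((n:ℂ) + 1) ^ (z - 1) * Complex.exp (-a * ((n:ℂ) + 1)))
      atTop {z : ℂ | z.re < 2} := by
    refine tendstoUniformlyOn_tsum hu (fun n z hz => ?_)
    rw [term_norm]
    refine mul_le_mul_of_nonneg_right ?_ (by positivity)
    refine Real.rpow_le_rpow_of_exponent_le (by push_cast; linarith [Nat.cast_nonneg (α := ℝ) n]) ?_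
    simp only [mem_setOf_eq] at hz
    linarith
  refine htuo.tendstoLocallyUniformlyOn.differentiableOn ?_ hopen
  filter_upwards with t
  refine DifferentiableOn.fun_sum fun n _ => ?_
  refine DifferentiableOn.mul_const ?_ _
  refine Differentiable.differentiableOn ?_
  refine Differentiable.const_cpow (by fun_prop) (Or.inl ?_)
  exact Nat.cast_add_one_ne_zero n

end Stmt17

theorem stmt17 (α : ℂ) (hα : α ≠ 0) (s : ℂ)
    (hs : Real.log ‖α‖ < s.re)
    (Z : ℂ → ℂ) (δ : ℝ) (hδ : 0 < δ)
    (hhol : DifferentiableOn ℂ Z {w : ℂ | -δ < w.re})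
    (heq : ∀ w : ℂ, 1 < w.re →
      HasSum (fun ν : ℤ =>
        (s - Complex.log α - 2 * (Real.pi : ℂ) * Complex.I * (ν : ℂ)) ^ (-w)) (Z w)) :
    Complex.exp (-(deriv Z 0)) = 1 - α * Complex.exp (-s) := by
  set a : ℂ := s - Complex.log α with hadef
  have ha : 0 < a.re := by
    rw [hadef, Complex.sub_re, Complex.log_re]
    linarith
  set G : ℂ → ℂ :=
    fun z => ∑' n : ℕ, ((n:ℂ) + 1) ^ (z - 1) * Complex.exp (-a * ((n:ℂ) + 1)) with hGdef
  set F : ℂ → ℂ := fun z => (Complex.Gamma z)⁻¹ * G z with hFdef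
  -- Step 1: Z = F on the half-plane 1 < re
  have hZF : ∀ w : ℂ, 1 < w.re → Z w = F w := by
    intro w hw
    have h1 : Z w = ∑' ν : ℤ, (s - Complex.log α - 2 * (π:ℂ) * Complex.I * (ν:ℂ)) ^ (-w) :=
      (heq w hw).tsum_eq.symm
    have h2 : ∑' ν : ℤ, (s - Complex.log α - 2 * (π:ℂ) * Complex.I * (ν:ℂ)) ^ (-w)
        = ∑' n : ℤ, (a + 2 * (π:ℂ) * Complex.I * (n:ℂ)) ^ (-w) := by
      rw [← (Equiv.neg ℤ).tsum_eq (fun n : ℤ => (a + 2 * (π:ℂ) * Complex.I * (n:ℂ)) ^ (-w))]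
      refine tsum_congr fun ν => ?_
      congr 1
      simp only [Equiv.neg_apply, Int.cast_neg, hadef]
      ring
    have hΓ : Complex.Gamma w ≠ 0 := by
      refine Complex.Gamma_ne_zero fun m => ?_
      intro hcon
      rw [hcon] at hw
      simp only [Complex.neg_re, Complex.natCast_re] at hw
      have : (0:ℝ) ≤ (m:ℝ) := Nat.cast_nonneg m
      linarith
    have h3 := Stmt17.poisson_key ha hw
    have hFw : F w = (Complex.Gamma w)⁻¹ * G w := rfl
    have hGw : G w = ∑' n : ℕ, ((n:ℂ) + 1) ^ (w - 1) * Complex.exp (-a * ((n:ℂ) + 1)) := rfl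
    rw [h1, h2, hFw, hGw, ← h3, ← mul_assoc, inv_mul_cancel₀ hΓ, one_mul]
  -- Step 2: identity theorem
  set δ' : ℝ := min δ 1 with hδ'def
  have hδ' : 0 < δ' := lt_min hδ one_pos
  set U : Set ℂ := {z : ℂ | -δ' < z.re ∧ z.re < 2} with hUdef
  have hUopen : IsOpen U := by
    refine IsOpen.inter ?_ ?_
    · exact isOpen_lt continuous_const Complex.continuous_re
    · exact isOpen_lt Complex.continuous_re continuous_const
  have hUconn : IsPreconnected U := by
    refine Convex.isPreconnected ?_
    exact (convex_halfSpace_re_gt (-δ')).inter (convex_halfSpace_re_lt 2)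
  have hFdiffU : DifferentiableOn ℂ F U := by
    refine DifferentiableOn.mul ?_ ?_
    · exact Complex.differentiable_one_div_Gamma.differentiableOn
    · exact (Stmt17.G_diff ha).mono (fun z hz => hz.2)
  have hZdiffU : DifferentiableOn ℂ Z U := by
    refine hhol.mono (fun z hz => ?_)
    have h1 : -δ ≤ -δ' := by
      simp only [neg_le_neg_iff, hδ'def]
      exact min_le_left _ _
    exact lt_of_le_of_lt h1 hz.1
  have hZan : AnalyticOnNhd ℂ Z U := DifferentiableOn.analyticOnNhd hZdiffU hUopen
  have hFan : AnalyticOnNhd ℂ F U := DifferentiableOn.analyticOnNhd hFdiffU hUopen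
  have hx₀ : ((3/2 : ℝ) : ℂ) ∈ U := by
    constructor <;> simp <;> linarith
  have hnhds : Z =ᶠ[𝓝 ((3/2 : ℝ) : ℂ)] F := by
    have hopen : IsOpen {z : ℂ | 1 < z.re} := isOpen_lt continuous_const Complex.continuous_re
    filter_upwards [hopen.mem_nhds (by norm_num : ((3/2:ℝ):ℂ) ∈ {z : ℂ | 1 < z.re})] with z hz
    exact hZF z hz
  have hEq : Set.EqOn Z F U :=
    hZan.eqOn_of_preconnected_of_eventuallyEq hFan hUconn hx₀ hnhds
  have h0U : (0:ℂ) ∈ U := by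
    constructor <;> simp [hδ']
  have hderiv : deriv Z 0 = deriv F 0 := by
    refine Filter.EventuallyEq.deriv_eq ?_
    filter_upwards [hUopen.mem_nhds h0U] with z hz
    exact hEq hz
  -- Step 3: compute deriv F 0
  have hGdiff0 : DifferentiableAt ℂ G 0 := by
    have hopen : IsOpen {z : ℂ | z.re < 2} := isOpen_lt Complex.continuous_re continuous_const
    exact (Stmt17.G_diff ha).differentiableAt (hopen.mem_nhds (by norm_num))
  have hΓinv : HasDerivAt (fun z : ℂ => (Complex.Gamma z)⁻¹) 1 0 := by
    have hfun : (fun z : ℂ => (Complex.Gamma z)⁻¹)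
        = fun z : ℂ => z * (Complex.Gamma (z + 1))⁻¹ :=
      funext Complex.one_div_Gamma_eq_self_mul_one_div_Gamma_add_one
    rw [hfun]
    have hH : DifferentiableAt ℂ (fun z : ℂ => (Complex.Gamma (z + 1))⁻¹) 0 := by
      exact (Complex.differentiable_one_div_Gamma.comp
        (differentiable_id.add_const 1)).differentiableAt
    have := (hasDerivAt_id (0:ℂ)).mul hH.hasDerivAt
    simpa [Complex.Gamma_one, Pi.mul_def] using this
  have hFderiv : HasDerivAt F (G 0) 0 := by
    have := hΓinv.mul hGdiff0.hasDerivAt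
    simpa [Complex.Gamma_zero, Pi.mul_def] using this
  -- Step 4: compute G 0
  set q : ℂ := Complex.exp (-a) with hqdef
  have hq : ‖q‖ < 1 := by
    rw [hqdef, Complex.norm_exp, Complex.neg_re]
    exact Real.exp_lt_one_iff.mpr (by linarith)
  have hG0 : G 0 = -Complex.log (1 - q) := by
    have htaylor := Complex.hasSum_taylorSeries_neg_log hq
    have hshift := (hasSum_nat_add_iff' (f := fun n : ℕ => q ^ n / n) 1).mpr htaylor
    simp only [Finset.range_one, Finset.sum_singleton, pow_zero, Nat.cast_zero, div_zero,
      sub_zero] at hshift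
    have hcongr : (fun n : ℕ => q ^ (n + 1) / ((n:ℂ) + 1))
        = fun n : ℕ => ((n:ℂ) + 1) ^ ((0:ℂ) - 1) * Complex.exp (-a * ((n:ℂ) + 1)) := by
      funext n
      have h1 : ((n:ℂ) + 1) ^ ((0:ℂ) - 1) = ((n:ℂ) + 1)⁻¹ := by
        rw [zero_sub, Complex.cpow_neg_one]
      have h2 : Complex.exp (-a * ((n:ℂ) + 1)) = q ^ (n + 1) := by
        rw [hqdef, ← Complex.exp_nat_mul]
        congr 1
        push_cast
        ring
      rw [h1, h2, div_eq_inv_mul]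
    have hG0' : G 0 = ∑' n : ℕ, ((n:ℂ) + 1) ^ ((0:ℂ) - 1) * Complex.exp (-a * ((n:ℂ) + 1)) := rfl
    rw [hG0']
    have : HasSum (fun n : ℕ => ((n:ℂ) + 1) ^ ((0:ℂ) - 1) * Complex.exp (-a * ((n:ℂ) + 1)))
        (-Complex.log (1 - q)) := by
      rw [← hcongr]
      convert hshift using 2 with n
      · rfl
      push_cast
      ring
    exact this.tsum_eq
  -- Step 5: conclude
  have h1q : 1 - q ≠ 0 := by
    intro hcon
    have : q = 1 := by linear_combination -hcon
    rw [this] at hq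
    simp at hq
  have hqval : q = α * Complex.exp (-s) := by
    rw [hqdef, hadef, neg_sub, Complex.exp_sub, Complex.exp_log hα, Complex.exp_neg]
    ring
  rw [hderiv, hFderiv.deriv, hG0, neg_neg, Complex.exp_log h1q, hqval]
end
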